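/- For all groves A, B, C of planar binary trees of positive degree, the dendriform relations hold: (A ⊣ B) ⊣ C = A ⊣ (B + C), (A ⊢ B) ⊣ C = A ⊢ (B ⊣ C), and (A + B) ⊢ C = A ⊢ (B ⊢ C). -/

import Mathlib

/-- A planar binary tree: a leaf `|` or a grafting `x ∨ y`. -/
inductive PBT : Type
  | leaf : PBT
  | node : PBT → PBT → PBT
  deriving DecidableEq

namespace PBT

/-- The degree: number of internal vertices. -/
def deg : PBT → ℕ
  | leaf => 0
  | node l r => deg l + deg r + 1

/-- The set `Y n` of planar binary trees of degree `n`. -/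
def Y (n : ℕ) : Set PBT := {t | t.deg = n}

/-- The `over` operation `x / y`. -/
def pover : PBT → PBT → PBT
  | x, leaf => x
  | x, node yl yr => node (pover x yl) yr

/-- The `under` operation `x \ y`. -/
def under : PBT → PBT → PBT
  | leaf, y => y
  | node xl xr, y => node xl (under xr y)

/-- The Tamari order, generated by `(x ∨ y) ∨ z ≤ x ∨ (y ∨ z)` and compatibility
with grafting on both sides. -/
inductive tle : PBT → PBT → Prop
  | refl (x : PBT) : tle x x
  | trans {x y z : PBT} : tle x y → tle y z → tle x z
  | rotate (x y z : PBT) : tle (node (node x y) z) (node x (node y z))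
  | node_left {x y : PBT} (z : PBT) : tle x y → tle (node x z) (node y z)
  | node_right {x y : PBT} (z : PBT) : tle x y → tle (node z x) (node z y)

/-- The sum of two planar binary trees: the Tamari interval `[x/y, x\y]`
(a subset of `Y (deg x + deg y)`). -/
def sum (x y : PBT) : Set PBT := {z | tle (pover x y) z ∧ tle z (under x y)}

/-- A grove of degree `n`: a nonempty subset of `Y n`. -/
def Grove (n : ℕ) (A : Set PBT) : Prop := A.Nonempty ∧ ∀ x ∈ A, x.deg = n

/-- The sum of groves. -/
def gsum (A B : Set PBT) : Set PBT := ⋃ x ∈ A, ⋃ y ∈ B, sum x y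

/-- The reflection involution σ. -/
def σ : PBT → PBT
  | leaf => leaf
  | node l r => node (σ r) (σ l)

/-- The left sum `x ⊣ y` of trees (with the conventions `x ⊣ | = {x}`, `| ⊣ y = {|}`). -/
def lsum : PBT → PBT → Set PBT
  | x, leaf => {x}
  | leaf, _ => {leaf}
  | node xl xr, y => (fun z => node xl z) '' sum xr y

/-- The right sum `x ⊢ y` of trees (with the conventions `| ⊢ y = {y}`, `x ⊢ | = {|}`). -/
def rsum : PBT → PBT → Set PBT
  | leaf, y => {y}
  | _, leaf => {leaf}
  | x, node yl yr => (fun z => node z yr) '' sum x yl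

/-- Left sum of groves. -/
def glsum (A B : Set PBT) : Set PBT := ⋃ x ∈ A, ⋃ y ∈ B, lsum x y

/-- Right sum of groves. -/
def grsum (A B : Set PBT) : Set PBT := ⋃ x ∈ A, ⋃ y ∈ B, rsum x y

/-- Multiplication of a tree by a grove:
`| × B = {|}` and `(xˡ ∨ xʳ) × B = ((xˡ × B) ⊢ B) ⊣ (xʳ × B)`.
(The conventions `{|} ⊢ B = B` and `A ⊣ {|} = A` are built into `rsum`/`lsum`.) -/
def tmul : PBT → Set PBT → Set PBT
  | leaf, _ => {leaf}
  | node l r, B => glsum (grsum (tmul l B) B) (tmul r B)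

/-- Multiplication of groves. -/
def gmul (A B : Set PBT) : Set PBT := ⋃ x ∈ A, tmul x B

end PBT


namespace PBT

/-! ### Basic lemmas -/

lemma deg_eq_zero_iff {x : PBT} : x.deg = 0 ↔ x = leaf := by
  cases x <;> simp [deg]

lemma tle_deg {x y : PBT} (h : tle x y) : x.deg = y.deg := by
  induction h with
  | refl => rfl
  | trans _ _ ih1 ih2 => omega
  | rotate a b c => simp [deg]; omega
  | node_left z _ ih => simp [deg, ih]
  | node_right z _ ih => simp [deg, ih]

/-- A weight functional strictly increased by rotations. -/
def wt : PBT → ℕ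
  | leaf => 0
  | node a b => wt a + wt b + deg b + 1

lemma tle_wt_le {x y : PBT} (h : tle x y) : wt x ≤ wt y := by
  induction h with
  | refl => exact le_rfl
  | trans _ _ ih1 ih2 => omega
  | rotate a b c => simp [wt, deg]; omega
  | node_left z _ ih => simp [wt]; omega
  | node_right z h ih => have := tle_deg h; simp [wt]; omega

lemma tle_eq_of_wt {x y : PBT} (h : tle x y) (hw : wt x = wt y) : x = y := by
  induction h with
  | refl => rfl
  | trans h1 h2 ih1 ih2 =>
      have l1 := tle_wt_le h1; have l2 := tle_wt_le h2
      have e1 : _ = _ := ih1 (by omega)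
      subst e1; exact ih2 hw
  | rotate a b c => exfalso; simp [wt, deg] at hw; omega
  | node_left z h ih => simp [wt] at hw; rw [ih (by omega)]
  | node_right z h ih => have := tle_deg h; simp [wt] at hw; rw [ih (by omega)]

lemma tle_antisymm {x y : PBT} (h1 : tle x y) (h2 : tle y x) : x = y :=
  tle_eq_of_wt h1 (le_antisymm (tle_wt_le h1) (tle_wt_le h2))

/-! ### over / under basics -/

@[simp] lemma over_leaf (x : PBT) : pover x leaf = x := rfl

@[simp] lemma leaf_over (y : PBT) : pover leaf y = y := by
  induction y with
  | leaf => rfl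
  | node a b ih1 ih2 => simp [pover, ih1]

@[simp] lemma leaf_under (y : PBT) : under leaf y = y := rfl

@[simp] lemma under_leaf (x : PBT) : under x leaf = x := by
  induction x with
  | leaf => rfl
  | node a b ih1 ih2 => simp [under, ih2]

@[simp] lemma deg_over (x y : PBT) : deg (pover x y) = deg x + deg y := by
  induction y with
  | leaf => simp [deg]
  | node a b ih1 ih2 => simp [pover, deg, ih1]; omega

@[simp] lemma deg_under (x y : PBT) : deg (under x y) = deg x + deg y := by
  induction x with
  | leaf => simp [deg]
  | node a b ih1 ih2 => simp [under, deg, ih2]; omega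

lemma over_assoc (x y z : PBT) : pover (pover x y) z = pover x (pover y z) := by
  induction z with
  | leaf => rfl
  | node a b ih1 ih2 => simp [pover, ih1]

lemma under_assoc (x y z : PBT) : under (under x y) z = under x (under y z) := by
  induction x with
  | leaf => rfl
  | node a b ih1 ih2 => simp [under, ih2]

lemma under_ne_leaf {x y : PBT} (hy : y ≠ leaf) : under x y ≠ leaf := by
  intro h
  have : deg (under x y) = 0 := by rw [h]; rfl
  rw [deg_under] at this
  exact hy (deg_eq_zero_iff.mp (by omega))

lemma over_ne_leaf {x y : PBT} (hy : y ≠ leaf) : pover x y ≠ leaf := by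
  intro h
  have : deg (pover x y) = 0 := by rw [h]; rfl
  rw [deg_over] at this
  exact hy (deg_eq_zero_iff.mp (by omega))

/-! ### monotonicity of over and under -/

lemma over_mono_left {a b : PBT} (z : PBT) (h : tle a b) : tle (pover a z) (pover b z) := by
  induction z with
  | leaf => exact h
  | node c d ih1 ih2 => exact tle.node_left d ih1

lemma under_mono_right {a b : PBT} (x : PBT) (h : tle a b) : tle (under x a) (under x b) := by
  induction x with
  | leaf => exact h
  | node c d ih1 ih2 => exact tle.node_right c ih2

lemma over_mono_right {y z : PBT} (x : PBT) (h : tle y z) : tle (pover x y) (pover x z) := by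
  induction h with
  | refl => exact tle.refl _
  | trans _ _ ih1 ih2 => exact tle.trans ih1 ih2
  | rotate a b c => exact tle.rotate _ _ _
  | node_left w _ ih => exact tle.node_left w ih
  | node_right w h _ => exact tle.node_right _ h

lemma under_mono_left {a b : PBT} (z : PBT) (h : tle a b) : tle (under a z) (under b z) := by
  induction h with
  | refl => exact tle.refl _
  | trans _ _ ih1 ih2 => exact tle.trans ih1 ih2
  | rotate p q r => simp [under]; exact tle.rotate _ _ _
  | node_left w _ ih => exact tle.node_left _ (by assumption)
  | node_right w _ ih => exact tle.node_right _ ih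

end PBT


namespace PBT

/-! ### the reflection σ -/

@[simp] lemma σ_invol (x : PBT) : σ (σ x) = x := by
  induction x with
  | leaf => rfl
  | node a b ih1 ih2 => simp [σ, ih1, ih2]

lemma σ_tle {x y : PBT} (h : tle x y) : tle (σ y) (σ x) := by
  induction h with
  | refl => exact tle.refl _
  | trans _ _ ih1 ih2 => exact tle.trans ih2 ih1
  | rotate a b c => exact tle.rotate _ _ _
  | node_left w _ ih => exact tle.node_right _ ih
  | node_right w _ ih => exact tle.node_left _ ih

lemma σ_tle_iff {x y : PBT} : tle (σ y) (σ x) ↔ tle x y := by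
  constructor
  · intro h; have := σ_tle h; simpa using this
  · exact σ_tle

lemma σ_over (x y : PBT) : σ (pover x y) = under (σ y) (σ x) := by
  induction y with
  | leaf => rfl
  | node a b ih1 ih2 => simp [pover, σ, under, ih1]

lemma σ_under (x y : PBT) : σ (under x y) = pover (σ y) (σ x) := by
  induction x with
  | leaf => rfl
  | node a b ih1 ih2 => simp [under, σ, pover, ih2]

lemma σ_ne_leaf {x : PBT} (h : x ≠ leaf) : σ x ≠ leaf := by
  cases x with
  | leaf => exact absurd rfl h
  | node a b => simp [σ]

/-! ### left-degree decrease / right-degree increase -/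

lemma tle_node_left_deg {u v : PBT} (h : tle u v) :
    ∀ a b vl vr, u = node a b → v = node vl vr →
      ((tle a vl ∧ tle b vr ∧ deg vl = deg a) ∨ deg vl < deg a) := by
  induction h with
  | refl x =>
      rintro a b vl vr rfl h2; cases h2
      exact Or.inl ⟨tle.refl _, tle.refl _, rfl⟩
  | @trans x y z h1 h2 ih1 ih2 =>
      rintro a b vl vr rfl rfl
      have hy : y ≠ leaf := by
        intro hl; subst hl
        have := tle_deg h1; simp [deg] at this
      obtain ⟨yl, yr, rfl⟩ : ∃ yl yr, y = node yl yr := by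
        cases y with
        | leaf => exact absurd rfl hy
        | node c d => exact ⟨c, d, rfl⟩
      rcases ih1 a b yl yr rfl rfl with ⟨t1, t2, e1⟩ | lt1
      · rcases ih2 yl yr vl vr rfl rfl with ⟨s1, s2, e2⟩ | lt2
        · exact Or.inl ⟨tle.trans t1 s1, tle.trans t2 s2, by omega⟩
        · exact Or.inr (by omega)
      · rcases ih2 yl yr vl vr rfl rfl with ⟨s1, s2, e2⟩ | lt2
        · exact Or.inr (by omega)
        · exact Or.inr (by omega)
  | rotate p q r =>
      rintro a b vl vr h1 h2
      injection h1 with h1l h1r; injection h2 with h2l h2r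
      subst h1l; subst h2l
      exact Or.inr (by simp only [deg]; omega)
  | @node_left x y z hxy ih =>
      rintro a b vl vr h1 h2
      injection h1 with h1l h1r; injection h2 with h2l h2r
      subst h1l; subst h1r; subst h2l; subst h2r
      exact Or.inl ⟨hxy, tle.refl _, (tle_deg hxy).symm⟩
  | @node_right x y z hxy ih =>
      rintro a b vl vr h1 h2
      injection h1 with h1l h1r; injection h2 with h2l h2r
      subst h1l; subst h1r; subst h2l; subst h2r
      exact Or.inl ⟨tle.refl _, hxy, rfl⟩

lemma tle_node_right_deg {u v : PBT} (h : tle u v) :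
    ∀ a b vl vr, u = node a b → v = node vl vr →
      ((tle a vl ∧ tle b vr ∧ deg b = deg vr) ∨ deg b < deg vr) := by
  intro a b vl vr hu hv
  have h' := σ_tle h
  have := tle_node_left_deg h' (σ vr) (σ vl) (σ b) (σ a)
    (by rw [hv]; rfl) (by rw [hu]; rfl)
  rcases this with ⟨t1, t2, e⟩ | lt
  · refine Or.inl ⟨σ_tle_iff.mp ?_, σ_tle_iff.mp ?_, ?_⟩
    · simpa using t2
    · simpa using t1
    · have d1 : deg (σ b) = deg b := by
        clear * -; induction b with
        | leaf => rfl
        | node c d ih1 ih2 => simp [σ, deg]; omega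
      have d2 : deg (σ vr) = deg vr := by
        clear * -; induction vr with
        | leaf => rfl
        | node c d ih1 ih2 => simp [σ, deg]; omega
      omega
  · have d1 : deg (σ b) = deg b := by
      clear * -; induction b with
      | leaf => rfl
      | node c d ih1 ih2 => simp [σ, deg]; omega
    have d2 : deg (σ vr) = deg vr := by
      clear * -; induction vr with
      | leaf => rfl
      | node c d ih1 ih2 => simp [σ, deg]; omega
    exact Or.inr (by omega)

end PBT


namespace PBT

@[simp] lemma deg_σ (x : PBT) : deg (σ x) = deg x := by
  induction x with
  | leaf => rfl
  | node a b ih1 ih2 => simp [σ, deg]; omega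

/-! ### lifting of under-splits along the Tamari order -/

lemma tle_under_split {z v : PBT} (h : tle z v) :
    ∀ a b, z = under a b → a ≠ leaf →
      ∃ t s, v = under t s ∧ t ≠ leaf ∧ tle a t ∧ tle b s := by
  induction h with
  | refl x => exact fun a b h1 h2 => ⟨a, b, h1, h2, tle.refl _, tle.refl _⟩
  | trans h1 h2 ih1 ih2 =>
      intro a b hz ha
      obtain ⟨t, s, hy, ht, hat, hbs⟩ := ih1 a b hz ha
      obtain ⟨t', s', hv, ht', h1', h2'⟩ := ih2 t s hy ht
      exact ⟨t', s', hv, ht', tle.trans hat h1', tle.trans hbs h2'⟩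
  | rotate p q r =>
      intro a b hz ha
      obtain ⟨al, ar, rfl⟩ : ∃ al ar, a = node al ar := by
        cases a with
        | leaf => exact absurd rfl ha
        | node c d => exact ⟨c, d, rfl⟩
      rw [under] at hz
      injection hz with h1 h2
      subst h1
      refine ⟨node p (node q ar), b, ?_, by simp, tle.rotate _ _ _, tle.refl _⟩
      simp [under, h2]
  | @node_left x y z hxy ih =>
      intro a b hz ha
      obtain ⟨al, ar, rfl⟩ : ∃ al ar, a = node al ar := by
        cases a with
        | leaf => exact absurd rfl ha
        | node c d => exact ⟨c, d, rfl⟩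
      rw [under] at hz
      injection hz with h1 h2
      subst h1
      exact ⟨node y ar, b, by simp [under, h2], by simp,
        tle.node_left ar hxy, tle.refl _⟩
  | @node_right x y z hxy ih =>
      intro a b hz ha
      obtain ⟨al, ar, rfl⟩ : ∃ al ar, a = node al ar := by
        cases a with
        | leaf => exact absurd rfl ha
        | node c d => exact ⟨c, d, rfl⟩
      rw [under] at hz
      injection hz with h1 h2
      subst h1
      cases ar with
      | leaf =>
          refine ⟨node z leaf, y, by simp [under], by simp, tle.refl _, ?_⟩
          exact (show x = b from h2) ▸ hxy
      | node ar1 ar2 =>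
          obtain ⟨t', s', hy', ht', h1', h2'⟩ := ih (node ar1 ar2) b h2 (by simp)
          exact ⟨node z t', s', by simp [under, hy'], by simp,
            tle.node_right z h1', h2'⟩

/-- Characterization of under-splits of `x \ y`. -/
lemma under_split_cases : ∀ (x y t s : PBT), under x y = under t s → t ≠ leaf →
    (∃ t', y = under t' s ∧ t = under x t') ∨ (∃ w, x = under t w ∧ s = under w y) := by
  intro x
  induction x with
  | leaf =>
      intro y t s h ht
      exact Or.inl ⟨t, by simpa using h, by simp⟩
  | node a b iha ihb =>
      intro y t s h ht
      obtain ⟨tl, tr, rfl⟩ : ∃ tl tr, t = node tl tr := by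
        cases t with
        | leaf => exact absurd rfl ht
        | node c d => exact ⟨c, d, rfl⟩
      rw [under, under] at h
      injection h with h1 h2
      subst h1
      cases tr with
      | leaf =>
          exact Or.inr ⟨b, by simp [under], by simpa using h2.symm⟩
      | node tr1 tr2 =>
          rcases ihb y (node tr1 tr2) s h2 (by simp) with ⟨t', hy, htr⟩ | ⟨w, hb, hs⟩
          · exact Or.inl ⟨t', hy, by simp [under, ← htr]⟩
          · exact Or.inr ⟨w, by simp [under, hb], hs⟩

/-! ### σ-duals -/

lemma tle_over_split {u z : PBT} (h : tle u z) :
    ∀ p q, z = pover p q → q ≠ leaf →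
      ∃ c d, u = pover c d ∧ d ≠ leaf ∧ tle c p ∧ tle d q := by
  intro p q hz hq
  have h' := σ_tle h
  obtain ⟨t, s, hσu, ht, h1, h2⟩ := tle_under_split h' (σ q) (σ p)
    (by rw [hz, σ_over]) (σ_ne_leaf hq)
  refine ⟨σ s, σ t, ?_, σ_ne_leaf ht, ?_, ?_⟩
  · have : σ (σ u) = σ (under t s) := by rw [hσu]
    rw [σ_invol, σ_under] at this; exact this
  · have := σ_tle h2; simpa using this
  · have := σ_tle h1; simpa using this

lemma over_split_cases : ∀ (x y c d : PBT), pover x y = pover c d → d ≠ leaf →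
    (∃ e, x = pover c e ∧ d = pover e y) ∨ (∃ e, c = pover x e ∧ y = pover e d) := by
  intro x y c d h hd
  have h' : under (σ y) (σ x) = under (σ d) (σ c) := by
    rw [← σ_over, ← σ_over, h]
  rcases under_split_cases (σ y) (σ x) (σ d) (σ c) h' (σ_ne_leaf hd) with
    ⟨t', hx, hσd⟩ | ⟨w, hσy, hσc⟩
  · refine Or.inl ⟨σ t', ?_, ?_⟩
    · have : σ (σ x) = σ (under t' (σ c)) := by rw [hx]
      rwa [σ_invol, σ_under, σ_invol] at this
    · have : σ (σ d) = σ (under (σ y) t') := by rw [hσd]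
      rwa [σ_invol, σ_under, σ_invol] at this
  · refine Or.inr ⟨σ w, ?_, ?_⟩
    · have : σ (σ c) = σ (under w (σ x)) := by rw [hσc]
      rwa [σ_invol, σ_under, σ_invol] at this
    · have : σ (σ y) = σ (under (σ d) w) := by rw [hσy]
      rwa [σ_invol, σ_under, σ_invol] at this

/-! ### deleting the rightmost leaf -/

def phi : PBT → PBT
  | leaf => leaf
  | node a leaf => a
  | node a (node b c) => node a (phi (node b c))

lemma phi_node {a b : PBT} (hb : b ≠ leaf) : phi (node a b) = node a (phi b) := by
  cases b with
  | leaf => exact absurd rfl hb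
  | node c d => rfl

lemma phi_mono {u v : PBT} (h : tle u v) : tle (phi u) (phi v) := by
  induction h with
  | refl => exact tle.refl _
  | trans _ _ ih1 ih2 => exact tle.trans ih1 ih2
  | rotate p q r =>
      cases r with
      | leaf => exact tle.refl _
      | node r1 r2 =>
          have e1 : phi (node (node p q) (node r1 r2))
              = node (node p q) (phi (node r1 r2)) := phi_node (by simp)
          have e2 : phi (node p (node q (node r1 r2)))
              = node p (node q (phi (node r1 r2))) := by
            rw [phi_node (show node q (node r1 r2) ≠ leaf by simp),
              phi_node (show (node r1 r2 : PBT) ≠ leaf by simp)]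
          rw [e1, e2]
          exact tle.rotate _ _ _
  | @node_left x y z hxy ih =>
      cases z with
      | leaf => exact hxy
      | node z1 z2 =>
          have e1 : phi (node x (node z1 z2)) = node x (phi (node z1 z2)) :=
            phi_node (by simp)
          have e2 : phi (node y (node z1 z2)) = node y (phi (node z1 z2)) :=
            phi_node (by simp)
          rw [e1, e2]
          exact tle.node_left _ hxy
  | @node_right x y z hxy ih =>
      cases x with
      | leaf =>
          have : y = leaf := deg_eq_zero_iff.mp (by rw [← tle_deg hxy]; rfl)
          subst this; exact tle.refl _
      | node x1 x2 =>
          have hy : y ≠ leaf := by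
            intro hl; subst hl
            have := tle_deg hxy; simp [deg] at this
          rw [phi_node (by simp), phi_node hy]
          exact tle.node_right _ ih

lemma phi_under (x c : PBT) : phi (under x (node c leaf)) = under x c := by
  induction x with
  | leaf => rfl
  | node a b iha ihb =>
      rw [under, phi_node (under_ne_leaf (by simp)), ihb, under]

end PBT


namespace PBT

lemma ne_leaf_node {a b : PBT} : node a b ≠ leaf := by simp

lemma exists_node_of_ne_leaf {a : PBT} (h : a ≠ leaf) : ∃ b c, a = node b c := by
  cases a with
  | leaf => exact absurd rfl h
  | node b c => exact ⟨b, c, rfl⟩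

lemma mem_sum {x y z : PBT} : z ∈ sum x y ↔ tle (pover x y) z ∧ tle z (under x y) :=
  Iff.rfl

lemma σ_mem_sum {x y z : PBT} : σ z ∈ sum (σ y) (σ x) ↔ z ∈ sum x y := by
  rw [mem_sum, mem_sum, ← σ_under, ← σ_over]
  constructor
  · rintro ⟨h1, h2⟩
    constructor
    · have := σ_tle h2; simpa using this
    · have := σ_tle h1; simpa using this
  · rintro ⟨h1, h2⟩
    exact ⟨σ_tle h2, σ_tle h1⟩

lemma over_le_node (xl xr y : PBT) :
    tle (pover (node xl xr) y) (node xl (pover xr y)) := by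
  induction y with
  | leaf => exact tle.refl _
  | node yl yr ih1 ih2 =>
      exact tle.trans (tle.node_left yr ih1) (tle.rotate _ _ _)

lemma node_under_le (x yl yr : PBT) :
    tle (node (under x yl) yr) (under x (node yl yr)) := by
  induction x with
  | leaf => exact tle.refl _
  | node a b ih1 ih2 =>
      exact tle.trans (tle.rotate _ _ _) (tle.node_right a ih2)

/-- The key step: in the "δ" configuration, `z` belongs to `x ⊢ y`. -/
lemma case_delta {x y zl zr e d : PBT}
    (hzu : tle (node zl zr) (under x y))
    (he : tle (pover x e) zl) (hyd : y = pover e d)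
    (hd : tle d (node leaf zr)) (hdne : d ≠ leaf) :
    ∃ yl yr, y = node yl yr ∧ zr = yr ∧ zl ∈ sum x yl := by
  obtain ⟨dl, dr, rfl⟩ := exists_node_of_ne_leaf hdne
  -- y = node (over e dl) dr
  rw [pover] at hyd
  -- F on the upper bound
  obtain ⟨t, s, hts, htne, hzt, hzs⟩ := tle_under_split hzu (node zl leaf) zr
    (by simp [under]) ne_leaf_node
  have hdeg_s : deg zr = deg s := tle_deg hzs
  have hdeg_d : deg dl + deg dr + 1 = deg zr + 1 := by
    have := tle_deg hd; simpa [deg] using this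
  rcases under_split_cases x y t s hts htne with ⟨t', hy', ht'⟩ | ⟨w, hxw, hsw⟩
  · -- split inside y
    have hdegy : deg y = deg t' + deg s := by rw [hy', deg_under]
    have ht'ne : t' ≠ leaf := by
      intro hl; subst hl
      rw [hyd] at hdegy
      simp [deg] at hdegy
      omega
    obtain ⟨t1, t2, rfl⟩ := exists_node_of_ne_leaf ht'ne
    rw [under] at hy'
    -- y = node t1 (under t2 s) and y = node (over e dl) dr
    have hy1 : pover e dl = t1 ∧ dr = under t2 s := by
      have := hyd.symm.trans hy'
      exact ⟨by injection this, by injection this⟩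
    have hdl : deg dl = 0 ∧ deg t2 = 0 := by
      have h1 : deg dr = deg t2 + deg s := by rw [hy1.2, deg_under]
      omega
    have hdl0 : dl = leaf := deg_eq_zero_iff.mp hdl.1
    have ht20 : t2 = leaf := deg_eq_zero_iff.mp hdl.2
    subst hdl0; subst ht20
    -- now yr = dr = s
    have hs_dr : dr = s := by simpa using hy1.2
    -- dr ≤ zr from hd
    have hdrzr : tle dr zr := by
      rcases tle_node_left_deg hd leaf dr leaf zr rfl rfl with ⟨_, h2, _⟩ | hlt
      · exact h2
      · simp [deg] at hlt
    have hzr : zr = dr := tle_antisymm (hs_dr ▸ hzs) hdrzr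
    refine ⟨pover e leaf, dr, hyd, hzr, ?_, ?_⟩
    · simpa using he
    · -- zl ≤ under x (over e leaf) = under x e
      have ht : t = under x (node e leaf) := by
        rw [ht']
        congr 1
        have := hy1.1; simpa using this.symm
      have := phi_mono (ht ▸ hzt)
      rw [phi_under] at this
      simpa [phi] using this
  · -- split inside x : impossible by degrees
    exfalso
    have h1 : deg s = deg w + deg y := by rw [hsw, deg_under]
    have h2 : deg y = deg e + (deg dl + deg dr + 1) := by rw [hyd]; simp [deg]; omega
    omega

/-- Transport of `case_delta` through σ: the "β" configuration gives `x ⊣ y`. -/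
lemma case_beta {x y zl zr t w : PBT}
    (hzl : tle (pover x y) (node zl zr))
    (hxt : x = under t w) (htne : t ≠ leaf)
    (hzt : tle (node zl leaf) t) (hzs : tle zr (under w y)) :
    ∃ xl xr, x = node xl xr ∧ zl = xl ∧ zr ∈ sum xr y := by
  have hzu : tle (node (σ zr) (σ zl)) (under (σ y) (σ x)) := by
    rw [← σ_over]
    have := σ_tle hzl
    simpa [σ] using this
  have he : tle (pover (σ y) (σ w)) (σ zr) := by
    have : tle (σ (under w y)) (σ zr) := σ_tle hzs
    rwa [σ_under] at this
  have hyd : σ x = pover (σ w) (σ t) := by rw [hxt, σ_under]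
  have hd : tle (σ t) (node leaf (σ zl)) := by
    have := σ_tle hzt
    simpa [σ] using this
  obtain ⟨yl, yr, hY, hzr, hmem⟩ := case_delta hzu he hyd hd (σ_ne_leaf htne)
  -- σ x = node yl yr
  refine ⟨σ yr, σ yl, ?_, ?_, ?_⟩
  · have : σ (σ x) = σ (node yl yr) := by rw [hY]
    simpa [σ] using this
  · have : σ (σ zl) = σ yr := by rw [hzr]
    simpa using this
  · rw [← σ_mem_sum]
    simpa using hmem

end PBT


namespace PBT

lemma deg_pos_of_ne_leaf {x : PBT} (h : x ≠ leaf) : 0 < deg x := by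
  rcases Nat.eq_zero_or_pos (deg x) with h0 | h0
  · exact absurd (deg_eq_zero_iff.mp h0) h
  · exact h0

lemma lsum_node (xl xr yl yr : PBT) :
    lsum (node xl xr) (node yl yr) = (fun z => node xl z) '' sum xr (node yl yr) := rfl

lemma rsum_node (xl xr yl yr : PBT) :
    rsum (node xl xr) (node yl yr) = (fun z => node z yr) '' sum (node xl xr) yl := rfl

/-- The splitting of a sum of trees into left and right sums. -/
theorem sum_eq_union {x y : PBT} (hx : x ≠ leaf) (hy : y ≠ leaf) :
    sum x y = lsum x y ∪ rsum x y := by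
  obtain ⟨xl, xr, rfl⟩ := exists_node_of_ne_leaf hx
  obtain ⟨yl, yr, rfl⟩ := exists_node_of_ne_leaf hy
  apply Set.Subset.antisymm
  · rintro z ⟨h1, h2⟩
    have hzne : z ≠ leaf := by
      intro hl; subst hl
      have := tle_deg h1
      simp [deg] at this
    obtain ⟨zl, zr, rfl⟩ := exists_node_of_ne_leaf hzne
    obtain ⟨c, d, hcd, hdne, hczl, hdzr⟩ := tle_over_split h1 zl (node leaf zr)
      (by simp [pover]) ne_leaf_node
    have finish_rsum : ∀ e, c = pover (node xl xr) e → node yl yr = pover e d →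
        (node zl zr) ∈ lsum (node xl xr) (node yl yr) ∪ rsum (node xl xr) (node yl yr) := by
      intro e hce hye
      obtain ⟨Yl, Yr, hY, hzr, hmem⟩ := case_delta h2 (hce ▸ hczl) hye hdzr hdne
      injection hY with hY1 hY2
      subst hY1; subst hY2; subst hzr
      exact Or.inr ⟨zl, hmem, rfl⟩
    have finish_lsum : ∀ t w, node xl xr = under t w → t ≠ leaf →
        tle (node zl leaf) t → tle zr (under w (node yl yr)) →
        (node zl zr) ∈ lsum (node xl xr) (node yl yr) ∪ rsum (node xl xr) (node yl yr) := by
      intro t w hxt htne hzt hzs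
      obtain ⟨Xl, Xr, hX, hzl, hmem⟩ := case_beta h1 hxt htne hzt hzs
      injection hX with hX1 hX2
      subst hX1; subst hX2; subst hzl
      exact Or.inl ⟨zr, hmem, rfl⟩
    rcases over_split_cases _ _ c d hcd hdne with ⟨e, hxe, hde⟩ | ⟨e, hce, hye⟩
    · by_cases hel : e = leaf
      · subst hel
        exact finish_rsum leaf (by simpa using hxe.symm) (by simpa using hde.symm)
      · -- use the upper bound
        obtain ⟨t, s, hts, htne, hzt, hzs⟩ := tle_under_split h2 (node zl leaf) zr
          (by simp [under]) ne_leaf_node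
        rcases under_split_cases _ _ t s hts htne with ⟨t', hy', ht'⟩ | ⟨w, hxw, hsw⟩
        · -- t' must be a leaf
          have d1 : deg t' + deg s = deg (node yl yr) := by
            rw [hy']; simp [deg_under]
          have d2 : deg s = deg zr := (tle_deg hzs).symm
          have d3 : deg d = deg zr + 1 := by simpa [deg] using tle_deg hdzr
          have d4 : deg d = deg e + deg (node yl yr) := by rw [hde]; simp
          have d5 : 0 < deg e := deg_pos_of_ne_leaf hel
          have ht'0 : t' = leaf := deg_eq_zero_iff.mp (by omega)
          subst ht'0
          simp only [leaf_under] at hy'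
          simp only [under_leaf] at ht'
          subst ht'
          exact finish_lsum (node xl xr) leaf (by simp) ne_leaf_node hzt
            (by simpa [← hy'] using hzs)
        · exact finish_lsum t w hxw htne hzt (hsw ▸ hzs)
    · exact finish_rsum e hce hye
  · rintro z (⟨w, hw, rfl⟩ | ⟨w, hw, rfl⟩)
    · obtain ⟨hw1, hw2⟩ := hw
      refine ⟨?_, ?_⟩
      · exact tle.trans (over_le_node xl xr (node yl yr)) (tle.node_right xl hw1)
      · exact tle.node_right xl hw2
    · obtain ⟨hw1, hw2⟩ := hw
      refine ⟨?_, ?_⟩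
      · exact tle.node_left yr hw1
      · exact tle.trans (tle.node_left yr hw2) (node_under_le (node xl xr) yl yr)

end PBT


namespace PBT

lemma sum_leaf (x : PBT) : sum x leaf = {x} := by
  ext z
  simp only [sum, over_leaf, under_leaf, Set.mem_setOf_eq, Set.mem_singleton_iff]
  constructor
  · rintro ⟨h1, h2⟩; exact (tle_antisymm h1 h2).symm
  · rintro rfl; exact ⟨tle.refl _, tle.refl _⟩

lemma leaf_sum (y : PBT) : sum leaf y = {y} := by
  ext z
  simp only [sum, leaf_over, leaf_under, Set.mem_setOf_eq, Set.mem_singleton_iff]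
  constructor
  · rintro ⟨h1, h2⟩; exact (tle_antisymm h1 h2).symm
  · rintro rfl; exact ⟨tle.refl _, tle.refl _⟩

lemma sum_ne_leaf {x y z : PBT} (h : z ∈ sum x y) (hxy : x ≠ leaf ∨ y ≠ leaf) :
    z ≠ leaf := by
  intro hl; subst hl
  have hd := tle_deg h.1
  rw [deg_over] at hd
  have hleaf : (leaf : PBT).deg = 0 := rfl
  have h0 : deg x = 0 ∧ deg y = 0 := by omega
  rcases hxy with h' | h'
  · exact h' (deg_eq_zero_iff.mp h0.1)
  · exact h' (deg_eq_zero_iff.mp h0.2)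

lemma lsum_ne (xl xr : PBT) {y : PBT} (hy : y ≠ leaf) :
    lsum (node xl xr) y = (fun w => node xl w) '' sum xr y := by
  obtain ⟨a, b, rfl⟩ := exists_node_of_ne_leaf hy; rfl

lemma rsum_ne {x : PBT} (yl yr : PBT) (hx : x ≠ leaf) :
    rsum x (node yl yr) = (fun w => node w yr) '' sum x yl := by
  obtain ⟨a, b, rfl⟩ := exists_node_of_ne_leaf hx; rfl

lemma rel1_aux {xl xr y c : PBT} (hy : y ≠ leaf) (hc : c ≠ leaf)
    (hassoc : (⋃ t ∈ sum xr y, sum t c) = ⋃ w ∈ sum y c, sum xr w) :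
    (⋃ u ∈ lsum (node xl xr) y, lsum u c) = ⋃ w ∈ sum y c, lsum (node xl xr) w := by
  ext z
  simp only [Set.mem_iUnion, exists_prop]
  constructor
  · rintro ⟨u, hu, hz⟩
    rw [lsum_ne xl xr hy] at hu
    obtain ⟨v, hv, rfl⟩ := hu
    rw [lsum_ne xl v hc] at hz
    obtain ⟨w, hw, rfl⟩ := hz
    have hmem : w ∈ ⋃ t ∈ sum xr y, sum t c := Set.mem_biUnion hv hw
    rw [hassoc] at hmem
    simp only [Set.mem_iUnion, exists_prop] at hmem
    obtain ⟨w', hw', hww⟩ := hmem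
    refine ⟨w', hw', ?_⟩
    rw [lsum_ne xl xr (sum_ne_leaf hw' (Or.inl hy))]
    exact ⟨w, hww, rfl⟩
  · rintro ⟨w', hw', hz⟩
    rw [lsum_ne xl xr (sum_ne_leaf hw' (Or.inl hy))] at hz
    obtain ⟨w, hw, rfl⟩ := hz
    have hmem : w ∈ ⋃ w ∈ sum y c, sum xr w := Set.mem_biUnion hw' hw
    rw [← hassoc] at hmem
    simp only [Set.mem_iUnion, exists_prop] at hmem
    obtain ⟨v, hv, hvw⟩ := hmem
    refine ⟨node xl v, ?_, ?_⟩
    · rw [lsum_ne xl xr hy]; exact ⟨v, hv, rfl⟩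
    · rw [lsum_ne xl v hc]; exact ⟨w, hvw, rfl⟩

lemma rel2 {x yl yr c : PBT} (hx : x ≠ leaf) (hc : c ≠ leaf) :
    (⋃ u ∈ rsum x (node yl yr), lsum u c) = ⋃ v ∈ lsum (node yl yr) c, rsum x v := by
  ext z
  simp only [Set.mem_iUnion, exists_prop]
  constructor
  · rintro ⟨u, hu, hz⟩
    rw [rsum_ne yl yr hx] at hu
    obtain ⟨w, hw, rfl⟩ := hu
    rw [lsum_ne w yr hc] at hz
    obtain ⟨v', hv', rfl⟩ := hz
    refine ⟨node yl v', ?_, ?_⟩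
    · rw [lsum_ne yl yr hc]; exact ⟨v', hv', rfl⟩
    · rw [rsum_ne yl v' hx]; exact ⟨w, hw, rfl⟩
  · rintro ⟨v, hv, hz⟩
    rw [lsum_ne yl yr hc] at hv
    obtain ⟨v', hv', rfl⟩ := hv
    rw [rsum_ne yl v' hx] at hz
    obtain ⟨w, hw, rfl⟩ := hz
    refine ⟨node w yr, ?_, ?_⟩
    · rw [rsum_ne yl yr hx]; exact ⟨w, hw, rfl⟩
    · rw [lsum_ne w yr hc]; exact ⟨v', hv', rfl⟩

lemma rel3_aux {x y cl cr : PBT} (hx : x ≠ leaf) (hy : y ≠ leaf)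
    (hassoc : (⋃ t ∈ sum x y, sum t cl) = ⋃ w ∈ sum y cl, sum x w) :
    (⋃ t ∈ sum x y, rsum t (node cl cr)) = ⋃ v ∈ rsum y (node cl cr), rsum x v := by
  ext z
  simp only [Set.mem_iUnion, exists_prop]
  constructor
  · rintro ⟨t, ht, hz⟩
    rw [rsum_ne cl cr (sum_ne_leaf ht (Or.inl hx))] at hz
    obtain ⟨w, hw, rfl⟩ := hz
    have hmem : w ∈ ⋃ t ∈ sum x y, sum t cl := Set.mem_biUnion ht hw
    rw [hassoc] at hmem
    simp only [Set.mem_iUnion, exists_prop] at hmem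
    obtain ⟨w', hw', hww⟩ := hmem
    refine ⟨node w' cr, ?_, ?_⟩
    · rw [rsum_ne cl cr hy]; exact ⟨w', hw', rfl⟩
    · rw [rsum_ne w' cr hx]; exact ⟨w, hww, rfl⟩
  · rintro ⟨v, hv, hz⟩
    rw [rsum_ne cl cr hy] at hv
    obtain ⟨w', hw', rfl⟩ := hv
    rw [rsum_ne w' cr hx] at hz
    obtain ⟨w, hw, rfl⟩ := hz
    have hmem : w ∈ ⋃ w ∈ sum y cl, sum x w := Set.mem_biUnion hw' hw
    rw [← hassoc] at hmem
    simp only [Set.mem_iUnion, exists_prop] at hmem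
    obtain ⟨t, ht, htw⟩ := hmem
    refine ⟨t, ht, ?_⟩
    rw [rsum_ne cl cr (sum_ne_leaf ht (Or.inl hx))]
    exact ⟨w, htw, rfl⟩

end PBT


namespace PBT

lemma rel2' {x y c : PBT} (hx : x ≠ leaf) (hy : y ≠ leaf) (hc : c ≠ leaf) :
    (⋃ u ∈ rsum x y, lsum u c) = ⋃ v ∈ lsum y c, rsum x v := by
  obtain ⟨yl, yr, rfl⟩ := exists_node_of_ne_leaf hy
  exact rel2 hx hc

theorem sum_assoc (x y z : PBT) :
    (⋃ t ∈ sum x y, sum t z) = ⋃ w ∈ sum y z, sum x w := by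
  have congr1 : ∀ (S : Set PBT) (f g : PBT → Set PBT), (∀ t ∈ S, f t = g t) →
      (⋃ t ∈ S, f t) = ⋃ t ∈ S, g t := by
    intro S f g h; ext u
    simp only [Set.mem_iUnion, exists_prop]
    constructor
    · rintro ⟨t, ht, hu⟩; exact ⟨t, ht, (h t ht) ▸ hu⟩
    · rintro ⟨t, ht, hu⟩; exact ⟨t, ht, (h t ht).symm ▸ hu⟩
  have distrib : ∀ (S : Set PBT) (f g : PBT → Set PBT),
      (⋃ t ∈ S, (f t ∪ g t)) = (⋃ t ∈ S, f t) ∪ (⋃ t ∈ S, g t) := by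
    intro S f g; ext u
    simp only [Set.mem_iUnion, Set.mem_union, exists_prop]
    constructor
    · rintro ⟨t, ht, hu | hu⟩
      · exact Or.inl ⟨t, ht, hu⟩
      · exact Or.inr ⟨t, ht, hu⟩
    · rintro (⟨t, ht, hu⟩ | ⟨t, ht, hu⟩)
      · exact ⟨t, ht, Or.inl hu⟩
      · exact ⟨t, ht, Or.inr hu⟩
  have bunion : ∀ (S T : Set PBT) (f : PBT → Set PBT),
      (⋃ t ∈ S ∪ T, f t) = (⋃ t ∈ S, f t) ∪ (⋃ t ∈ T, f t) := by
    intro S T f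
    exact Set.biUnion_union S T f
  have main : ∀ d x y z, deg x + deg y + deg z = d →
      ((⋃ t ∈ sum x y, sum t z) = ⋃ w ∈ sum y z, sum x w) := by
    intro d
    induction d using Nat.strong_induction_on with
    | _ d IH =>
      intro x y z hd
      by_cases hx : x = leaf
      · subst hx; simp [leaf_sum]
      · by_cases hy : y = leaf
        · subst hy; simp [sum_leaf, leaf_sum]
        · by_cases hz : z = leaf
          · subst hz; simp [sum_leaf]
          · obtain ⟨xl, xr, hxe⟩ := exists_node_of_ne_leaf hx
            obtain ⟨zl, zr, hze⟩ := exists_node_of_ne_leaf hz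
            subst hxe; subst hze
            have ihx : (⋃ t ∈ sum xr y, sum t (node zl zr))
                = ⋃ w ∈ sum y (node zl zr), sum xr w := by
              refine IH (deg xr + deg y + deg (node zl zr)) ?_ xr y (node zl zr) rfl
              simp only [deg] at hd ⊢; omega
            have ihz : (⋃ t ∈ sum (node xl xr) y, sum t zl)
                = ⋃ w ∈ sum y zl, sum (node xl xr) w := by
              refine IH (deg (node xl xr) + deg y + deg zl) ?_ _ _ _ rfl
              simp only [deg] at hd ⊢; omega
            calc (⋃ t ∈ sum (node xl xr) y, sum t (node zl zr))
                = ⋃ t ∈ sum (node xl xr) y,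
                    (lsum t (node zl zr) ∪ rsum t (node zl zr)) :=
                  congr1 _ _ _ (fun t ht => sum_eq_union (sum_ne_leaf ht (Or.inl hx)) hz)
              _ = (⋃ t ∈ sum (node xl xr) y, lsum t (node zl zr))
                    ∪ (⋃ t ∈ sum (node xl xr) y, rsum t (node zl zr)) := distrib _ _ _
              _ = ((⋃ t ∈ lsum (node xl xr) y, lsum t (node zl zr))
                    ∪ (⋃ t ∈ rsum (node xl xr) y, lsum t (node zl zr)))
                    ∪ (⋃ t ∈ sum (node xl xr) y, rsum t (node zl zr)) := by
                  rw [sum_eq_union hx hy, bunion]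
              _ = ((⋃ w ∈ sum y (node zl zr), lsum (node xl xr) w)
                    ∪ (⋃ v ∈ lsum y (node zl zr), rsum (node xl xr) v))
                    ∪ (⋃ v ∈ rsum y (node zl zr), rsum (node xl xr) v) := by
                  rw [rel1_aux hy hz ihx, rel2' hx hy hz, rel3_aux hx hy ihz]
              _ = (⋃ w ∈ sum y (node zl zr), lsum (node xl xr) w)
                    ∪ ((⋃ v ∈ lsum y (node zl zr), rsum (node xl xr) v)
                    ∪ (⋃ v ∈ rsum y (node zl zr), rsum (node xl xr) v)) :=
                  Set.union_assoc _ _ _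
              _ = (⋃ w ∈ sum y (node zl zr), lsum (node xl xr) w)
                    ∪ (⋃ w ∈ sum y (node zl zr), rsum (node xl xr) w) := by
                  rw [← bunion, ← sum_eq_union hy hz]
              _ = ⋃ w ∈ sum y (node zl zr),
                    (lsum (node xl xr) w ∪ rsum (node xl xr) w) := (distrib _ _ _).symm
              _ = ⋃ w ∈ sum y (node zl zr), sum (node xl xr) w :=
                  congr1 _ _ _
                    (fun w hw => (sum_eq_union hx (sum_ne_leaf hw (Or.inl hy))).symm)
  exact main _ x y z rfl

theorem rel1 {x y c : PBT} (hx : x ≠ leaf) (hy : y ≠ leaf) (hc : c ≠ leaf) :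
    (⋃ u ∈ lsum x y, lsum u c) = ⋃ w ∈ sum y c, lsum x w := by
  obtain ⟨xl, xr, rfl⟩ := exists_node_of_ne_leaf hx
  exact rel1_aux hy hc (sum_assoc xr y c)

theorem rel3 {x y c : PBT} (hx : x ≠ leaf) (hy : y ≠ leaf) (hc : c ≠ leaf) :
    (⋃ t ∈ sum x y, rsum t c) = ⋃ v ∈ rsum y c, rsum x v := by
  obtain ⟨cl, cr, rfl⟩ := exists_node_of_ne_leaf hc
  exact rel3_aux hx hy (sum_assoc x y cl)

end PBT

open PBT in
/-- the dendriform relations for groves of positive degree. -/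
theorem grove_dendriform (n m p : ℕ) (hn : 0 < n) (hm : 0 < m) (hp : 0 < p)
    (A B C : Set PBT) (hA : Grove n A) (hB : Grove m B) (hC : Grove p C) :
    glsum (glsum A B) C = glsum A (gsum B C) ∧
    glsum (grsum A B) C = grsum A (glsum B C) ∧
    grsum (gsum A B) C = grsum A (grsum B C) := by
  obtain ⟨-, hAd⟩ := hA
  obtain ⟨-, hBd⟩ := hB
  obtain ⟨-, hCd⟩ := hC
  have hAne : ∀ x ∈ A, x ≠ PBT.leaf := by
    intro x hx h; subst h
    have := hAd _ hx; simp [PBT.deg] at this; omega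
  have hBne : ∀ x ∈ B, x ≠ PBT.leaf := by
    intro x hx h; subst h
    have := hBd _ hx; simp [PBT.deg] at this; omega
  have hCne : ∀ x ∈ C, x ≠ PBT.leaf := by
    intro x hx h; subst h
    have := hCd _ hx; simp [PBT.deg] at this; omega
  refine ⟨?_, ?_, ?_⟩
  · ext z
    simp only [glsum, gsum, Set.mem_iUnion, exists_prop]
    constructor
    · rintro ⟨u, ⟨x, hx, y, hy, hu⟩, c, hc, hz⟩
      have h := rel1 (hAne x hx) (hBne y hy) (hCne c hc)
      have hm : z ∈ ⋃ u ∈ lsum x y, lsum u c := Set.mem_biUnion hu hz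
      rw [h] at hm
      simp only [Set.mem_iUnion, exists_prop] at hm
      obtain ⟨w, hw, hz'⟩ := hm
      exact ⟨x, hx, w, ⟨y, hy, c, hc, hw⟩, hz'⟩
    · rintro ⟨x, hx, w, ⟨y, hy, c, hc, hw⟩, hz⟩
      have h := rel1 (hAne x hx) (hBne y hy) (hCne c hc)
      have hm : z ∈ ⋃ w ∈ sum y c, lsum x w := Set.mem_biUnion hw hz
      rw [← h] at hm
      simp only [Set.mem_iUnion, exists_prop] at hm
      obtain ⟨u, hu, hz'⟩ := hm
      exact ⟨u, ⟨x, hx, y, hy, hu⟩, c, hc, hz'⟩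
  · ext z
    simp only [glsum, grsum, Set.mem_iUnion, exists_prop]
    constructor
    · rintro ⟨u, ⟨x, hx, y, hy, hu⟩, c, hc, hz⟩
      have h := rel2' (hAne x hx) (hBne y hy) (hCne c hc)
      have hm : z ∈ ⋃ u ∈ rsum x y, lsum u c := Set.mem_biUnion hu hz
      rw [h] at hm
      simp only [Set.mem_iUnion, exists_prop] at hm
      obtain ⟨v, hv, hz'⟩ := hm
      exact ⟨x, hx, v, ⟨y, hy, c, hc, hv⟩, hz'⟩
    · rintro ⟨x, hx, v, ⟨y, hy, c, hc, hv⟩, hz⟩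
      have h := rel2' (hAne x hx) (hBne y hy) (hCne c hc)
      have hm : z ∈ ⋃ v ∈ lsum y c, rsum x v := Set.mem_biUnion hv hz
      rw [← h] at hm
      simp only [Set.mem_iUnion, exists_prop] at hm
      obtain ⟨u, hu, hz'⟩ := hm
      exact ⟨u, ⟨x, hx, y, hy, hu⟩, c, hc, hz'⟩
  · ext z
    simp only [grsum, gsum, Set.mem_iUnion, exists_prop]
    constructor
    · rintro ⟨t, ⟨x, hx, y, hy, ht⟩, c, hc, hz⟩
      have h := rel3 (hAne x hx) (hBne y hy) (hCne c hc)
      have hm : z ∈ ⋃ t ∈ sum x y, rsum t c := Set.mem_biUnion ht hz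
      rw [h] at hm
      simp only [Set.mem_iUnion, exists_prop] at hm
      obtain ⟨v, hv, hz'⟩ := hm
      exact ⟨x, hx, v, ⟨y, hy, c, hc, hv⟩, hz'⟩
    · rintro ⟨x, hx, v, ⟨y, hy, c, hc, hv⟩, hz⟩
      have h := rel3 (hAne x hx) (hBne y hy) (hCne c hc)
      have hm : z ∈ ⋃ v ∈ rsum y c, rsum x v := Set.mem_biUnion hv hz
      rw [← h] at hm
      simp only [Set.mem_iUnion, exists_prop] at hm
      obtain ⟨t, ht, hz'⟩ := hm
      exact ⟨t, ⟨x, hx, y, hy, ht⟩, c, hc, hz'⟩
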